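/- Let Σ be a symmetric positive-definite K×K matrix with Σ^{-1} having nonnegative entries, and μ ∈ ℝ^K. Then the function g(θ) = -½ (log θ - μ)ᵀ Σ^{-1} (log θ - μ) is concave on the convex set S = {θ ∈ Δ : θ_k > 0 and log θ_k ≤ μ_k for all k}, where Δ is the unit simplex in ℝ^K. -/

import Mathlib

open Finset Matrix

/-- Monotonicity of the quadratic form with nonnegative entries on the nonpositive
orthant: if `x ≤ y ≤ 0` componentwise then `yᵀAy ≤ xᵀAx`. -/
private lemma quad_mono {K : ℕ} (A : Matrix (Fin K) (Fin K) ℝ)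
    (hA : ∀ i j, 0 ≤ A i j) (x y : Fin K → ℝ)
    (hxy : ∀ i, x i ≤ y i) (hy : ∀ i, y i ≤ 0) :
    y ⬝ᵥ A.mulVec y ≤ x ⬝ᵥ A.mulVec x := by
  have hx : ∀ k, x k ≤ 0 := fun k => (hxy k).trans (hy k)
  simp only [dotProduct, Matrix.mulVec, dotProduct, Finset.mul_sum]
  refine Finset.sum_le_sum fun i _ => Finset.sum_le_sum fun j _ => ?_
  have h1 : y i * y j ≤ x i * y j :=
    mul_le_mul_of_nonpos_right (hxy i) (hy j)
  have h2 : x i * y j ≤ x i * x j :=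
    mul_le_mul_of_nonpos_left (hxy j) (hx i)
  nlinarith [hA i j, h1, h2]

/-- Convexity inequality for the quadratic form of a positive semidefinite matrix. -/
private lemma quad_convex {K : ℕ} (A : Matrix (Fin K) (Fin K) ℝ)
    (hA : A.PosSemidef) (x y : Fin K → ℝ) {a b : ℝ} (ha : 0 ≤ a) (hb : 0 ≤ b)
    (hab : a + b = 1) :
    (a • x + b • y) ⬝ᵥ A.mulVec (a • x + b • y)
      ≤ a * (x ⬝ᵥ A.mulVec x) + b * (y ⬝ᵥ A.mulVec y) := by
  have hpsd : 0 ≤ (x - y) ⬝ᵥ A.mulVec (x - y) := by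
    have := hA.dotProduct_mulVec_nonneg (x - y)
    simpa using this
  have key : a * (x ⬝ᵥ A.mulVec x) + b * (y ⬝ᵥ A.mulVec y)
      - ((a • x + b • y) ⬝ᵥ A.mulVec (a • x + b • y))
      = a * b * ((x - y) ⬝ᵥ A.mulVec (x - y)) := by
    simp only [Matrix.mulVec_add, Matrix.mulVec_smul, Matrix.mulVec_sub,
      add_dotProduct, dotProduct_add, smul_dotProduct, dotProduct_smul,
      sub_dotProduct, dotProduct_sub, smul_eq_mul]
    linear_combination (-(a * (x ⬝ᵥ A.mulVec x) + b * (y ⬝ᵥ A.mulVec y))) * hab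
  nlinarith [mul_nonneg (mul_nonneg ha hb) hpsd, key]

/-- With mean `μ`, `g(θ) = -½ (log θ - μ)ᵀ Σ⁻¹ (log θ - μ)` is concave on the convex
set `S = {θ ∈ Δ : θ k > 0 and log θ k ≤ μ k for all k}`, where `Σ⁻¹ = A` is symmetric
positive definite with nonnegative entries. -/
theorem ctm_full_prior_concave {K : ℕ} (A : Matrix (Fin K) (Fin K) ℝ)
    (hA_pd : A.PosDef) (hA_nonneg : ∀ i j, 0 ≤ A i j) (μ : Fin K → ℝ) :
    ConcaveOn ℝ
      {θ : Fin K → ℝ | θ ∈ stdSimplex ℝ (Fin K) ∧ ∀ k, 0 < θ k ∧ Real.log (θ k) ≤ μ k}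
      (fun θ => -(1 / 2) *
        ((fun i => Real.log (θ i) - μ i) ⬝ᵥ A.mulVec fun i => Real.log (θ i) - μ i)) := by
  set S := {θ : Fin K → ℝ | θ ∈ stdSimplex ℝ (Fin K) ∧ ∀ k, 0 < θ k ∧ Real.log (θ k) ≤ μ k}
  -- membership facts for convex combinations
  have hmem : ∀ θ ∈ S, ∀ σ ∈ S, ∀ a b : ℝ, 0 ≤ a → 0 ≤ b → a + b = 1 →
      a • θ + b • σ ∈ S := by
    rintro θ ⟨hθΔ, hθ⟩ σ ⟨hσΔ, hσ⟩ a b ha hb hab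
    refine ⟨(convex_stdSimplex ℝ (Fin K)) hθΔ hσΔ ha hb hab, fun k => ?_⟩
    have hθk := (hθ k).1
    have hσk := (hσ k).1
    have hpos : 0 < a * θ k + b * σ k := by
      rcases eq_or_lt_of_le ha with h | h
      · have hb1 : b = 1 := by linarith
        simpa [← h, hb1] using hσk
      · have : 0 < a * θ k := mul_pos h hθk
        nlinarith [mul_nonneg hb hσk.le]
    refine ⟨hpos, ?_⟩
    have hθe : θ k ≤ Real.exp (μ k) := by
      rw [← Real.exp_log hθk]; exact Real.exp_le_exp.2 (hθ k).2
    have hσe : σ k ≤ Real.exp (μ k) := by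
      rw [← Real.exp_log hσk]; exact Real.exp_le_exp.2 (hσ k).2
    have : a * θ k + b * σ k ≤ Real.exp (μ k) := by
      nlinarith [mul_le_mul_of_nonneg_left hθe ha, mul_le_mul_of_nonneg_left hσe hb]
    calc Real.log (a • θ k + b • σ k) ≤ Real.log (Real.exp (μ k)) := by
          apply Real.log_le_log (by simpa using hpos)
          simpa using this
      _ = μ k := Real.log_exp _
  constructor
  · intro θ hθ σ hσ a b ha hb hab
    exact hmem θ hθ σ hσ a b ha hb hab
  · rintro θ hθS σ hσS a b ha hb hab
    obtain ⟨hθΔ, hθ⟩ := hθS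
    obtain ⟨hσΔ, hσ⟩ := hσS
    dsimp only
    set x : Fin K → ℝ := fun i => Real.log (θ i) - μ i with hxdef
    set y : Fin K → ℝ := fun i => Real.log (σ i) - μ i with hydef
    set z : Fin K → ℝ := fun i => Real.log ((a • θ + b • σ) i) - μ i with hzdef
    obtain ⟨_, hzS⟩ := hmem θ ⟨hθΔ, hθ⟩ σ ⟨hσΔ, hσ⟩ a b ha hb hab
    -- componentwise : a x + b y ≤ z ≤ 0
    have hle : ∀ i, (a • x + b • y) i ≤ z i := by
      intro i
      have hlog : a * Real.log (θ i) + b * Real.log (σ i)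
          ≤ Real.log (a * θ i + b * σ i) := by
        have := strictConcaveOn_log_Ioi.concaveOn.2
          (Set.mem_Ioi.2 (hθ i).1) (Set.mem_Ioi.2 (hσ i).1) ha hb hab
        simpa [smul_eq_mul] using this
      have hμ : a * μ i + b * μ i = μ i := by rw [← add_mul, hab, one_mul]
      simp only [Pi.add_apply, Pi.smul_apply, smul_eq_mul, hxdef, hydef, hzdef]
      linarith [hlog, hμ]
    have hz0 : ∀ i, z i ≤ 0 := fun i => by
      have := (hzS i).2
      simp only [hzdef]; linarith
    have h1 : z ⬝ᵥ A.mulVec z ≤ (a • x + b • y) ⬝ᵥ A.mulVec (a • x + b • y) :=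
      quad_mono A hA_nonneg (a • x + b • y) z hle hz0
    have h2 : (a • x + b • y) ⬝ᵥ A.mulVec (a • x + b • y)
        ≤ a * (x ⬝ᵥ A.mulVec x) + b * (y ⬝ᵥ A.mulVec y) :=
      quad_convex A hA_pd.posSemidef x y ha hb hab
    simp only [smul_eq_mul]
    linarith [le_trans h1 h2]
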